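/- In the bigraded ring A_* = ℤ₂[τ, h₁, a, b^{±1}]/(2h₁, τh₁³, a² − 4b, h₁a), the group of homogeneous units is {u·b^k : u ∈ ℤ₂^×, k ∈ ℤ}; in particular a homogeneous unit exists in bidegree (p,q) iff (p,q) ∈ ℤ·(8,4). -/

import Mathlib

open MvPolynomial

/-- Variables τ, h₁, a, b, b' (b' = b⁻¹). -/
noncomputable abbrev KQpoly : Type := MvPolynomial (Fin 5) ℤ_[2]

/-- π_{*,*}(KQ^∧₂) = ℤ₂[τ, h₁, a, b^{±1}]/(2h₁, τh₁³, a² - 4b, h₁a), with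
b inverted via the extra variable b' and the relation b·b' = 1. -/
noncomputable abbrev KQring : Type :=
  KQpoly ⧸ Ideal.span ({2 * X 1, X 0 * X 1 ^ 3, X 2 ^ 2 - 4 * X 3,
    X 1 * X 2, X 3 * X 4 - 1} : Set KQpoly)

noncomputable abbrev KQmk : KQpoly →+* KQring := Ideal.Quotient.mk _

/-- Bidegrees of the generators: |τ| = (0,-1), |h₁| = (1,1), |a| = (4,2),
|b| = (8,4), |b'| = (-8,-4). -/
def KQdeg : Fin 5 → ℤ × ℤ := ![(0, -1), (1, 1), (4, 2), (8, 4), (-8, -4)]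

/-- The homogeneous part of bidegree v: the ℤ₂-span of (classes of) monomials
of total bidegree v. -/
noncomputable def KQgrade (v : ℤ × ℤ) : Submodule ℤ_[2] KQring :=
  Submodule.span ℤ_[2] {x : KQring | ∃ e : Fin 5 →₀ ℕ,
    (∑ i : Fin 5, (e i : ℤ) • KQdeg i) = v ∧ x = KQmk (monomial e 1)}

/-! ### Auxiliary machinery -/

/-- The detection homomorphism from the polynomial ring: τ ↦ X, h₁ ↦ 0, a ↦ 2,
b ↦ 1, b' ↦ 1; its target is ℤ₂[X]. -/
noncomputable def KQf : KQpoly →+* Polynomial ℤ_[2] :=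
  (aeval (R := ℤ_[2]) ![Polynomial.X, 0, 2, 1, 1]).toRingHom

lemma KQf_gen : ∀ a ∈ Ideal.span ({2 * X 1, X 0 * X 1 ^ 3, X 2 ^ 2 - 4 * X 3,
    X 1 * X 2, X 3 * X 4 - 1} : Set KQpoly), KQf a = 0 := by
  intro a ha
  refine (Ideal.span_le (I := RingHom.ker KQf)).2 ?_ ha
  intro x hx
  simp only [Set.mem_insert_iff, Set.mem_singleton_iff] at hx
  rcases hx with h|h|h|h|h <;> subst h <;>
    simp [KQf, RingHom.mem_ker, Matrix.cons_val_zero, Matrix.cons_val_one] <;> ring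

/-- The induced detection homomorphism on the quotient. -/
noncomputable def KQphi : KQring →+* Polynomial ℤ_[2] :=
  Ideal.Quotient.lift _ KQf KQf_gen

lemma KQphi_mk (x : KQpoly) : KQphi (KQmk x) = KQf x := rfl

/-! Relations in the quotient ring. -/

lemma rel_mem (x : KQpoly) (hx : x ∈ ({2 * X 1, X 0 * X 1 ^ 3, X 2 ^ 2 - 4 * X 3,
    X 1 * X 2, X 3 * X 4 - 1} : Set KQpoly)) : KQmk x = 0 :=
  (Ideal.Quotient.eq_zero_iff_mem).2 (Ideal.subset_span hx)

lemma r2 : KQmk (X 0) * KQmk (X 1) ^ 3 = 0 := by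
  have := rel_mem (X 0 * X 1 ^ 3) (by simp); simpa using this

lemma r3 : KQmk (X 2) ^ 2 = 4 * KQmk (X 3) := by
  have := rel_mem (X 2 ^ 2 - 4 * X 3) (by simp)
  have h : KQmk (X 2 ^ 2 - 4 * X 3) = KQmk (X 2) ^2 - 4 * KQmk (X 3) := by
    push_cast [map_sub, map_mul, map_pow] ; ring_nf; simp [map_ofNat]; ring
  rw [h] at this; linear_combination this

lemma r5 : KQmk (X 3) * KQmk (X 4) = 1 := by
  have := rel_mem (X 3 * X 4 - 1) (by simp)
  have h : KQmk (X 3 * X 4 - 1) = KQmk (X 3) * KQmk (X 4) - 1 := by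
    simp [map_sub, map_mul]
  rw [h] at this; linear_combination this

lemma monomial_expand (e : Fin 5 →₀ ℕ) :
    (monomial e 1 : KQpoly) =
      X 0 ^ (e 0) * X 1 ^ (e 1) * X 2 ^ (e 2) * X 3 ^ (e 3) * X 4 ^ (e 4) := by
  rw [monomial_eq, Finsupp.prod_fintype _ _ (fun i => pow_zero _), Fin.prod_univ_five]
  simp [mul_assoc]

lemma deg_eq (e : Fin 5 →₀ ℕ) (p q : ℤ)
    (h : (∑ i : Fin 5, (e i : ℤ) • KQdeg i) = (p, q)) :
    (e 1 : ℤ) + 4 * e 2 + 8 * e 3 - 8 * e 4 = p ∧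
    -(e 0 : ℤ) + e 1 + 2 * e 2 + 4 * e 3 - 4 * e 4 = q := by
  rw [Fin.sum_univ_five] at h
  simp [KQdeg, Prod.ext_iff, Prod.smul_mk, smul_eq_mul] at h
  constructor <;> linarith [h.1, h.2]

lemma C_four : KQmk (MvPolynomial.C (4 : ℤ_[2])) = 4 := by
  rw [map_ofNat]; rw [map_ofNat]

lemma shift_pow (M N t : ℕ) :
    KQmk (X 3) ^ (M + t) * KQmk (X 4) ^ (N + t) = KQmk (X 3) ^ M * KQmk (X 4) ^ N := by
  rw [pow_add, pow_add]
  have : (KQmk (X 3) * KQmk (X 4)) ^ t = 1 := by rw [r5, one_pow]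
  calc KQmk (X 3) ^ M * KQmk (X 3) ^ t * (KQmk (X 4) ^ N * KQmk (X 4) ^ t)
      = KQmk (X 3) ^ M * KQmk (X 4) ^ N * (KQmk (X 3) * KQmk (X 4)) ^ t := by ring
    _ = _ := by rw [this, mul_one]

/-- Normal form for homogeneous elements of bidegree (8k, 4k). -/
def Form (k : ℤ) (x : KQring) : Prop :=
  ∃ (c : ℤ_[2]) (M N : ℕ), (M : ℤ) - N = k ∧ x = KQmk (C c * X 3 ^ M * X 4 ^ N)

lemma mono_reduce (k : ℤ) (e : Fin 5 →₀ ℕ)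
    (h : (∑ i : Fin 5, (e i : ℤ) • KQdeg i) = (8 * k, 4 * k)) :
    Form k (KQmk (monomial e 1)) := by
  obtain ⟨h1, h2⟩ := deg_eq e _ _ h
  by_cases h0 : e 0 = 0
  · have he1 : e 1 = 0 := by omega
    obtain ⟨g, hg⟩ : ∃ g, e 2 = 2 * g := ⟨e 2 / 2, by omega⟩
    refine ⟨(4 : ℤ_[2]) ^ g, g + e 3, e 4, by push_cast; omega, ?_⟩
    rw [monomial_expand, h0, he1, hg]
    rw [map_mul, map_mul, map_mul, map_mul, map_pow, map_pow, map_pow, map_pow, map_pow]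
    rw [map_mul, map_mul, map_pow, map_pow, map_pow]
    rw [pow_mul, r3, mul_pow, map_pow, C_four]
    ring
  · have he0 : 1 ≤ e 0 := by omega
    have he1 : 3 ≤ e 1 := by omega
    refine ⟨0, k.toNat, (-k).toNat, by omega, ?_⟩
    have hz : KQmk (monomial e 1) = 0 := by
      rw [monomial_expand, map_mul, map_mul, map_mul, map_mul,
        map_pow, map_pow, map_pow, map_pow, map_pow,
        show e 0 = (e 0 - 1) + 1 from by omega, show e 1 = (e 1 - 3) + 3 from by omega,
        pow_add, pow_add]
      calc KQmk (X 0) ^ (e 0 - 1) * KQmk (X 0) ^ 1 * (KQmk (X 1) ^ (e 1 - 3) * KQmk (X 1) ^ 3) *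
            KQmk (X 2) ^ e 2 * KQmk (X 3) ^ e 3 * KQmk (X 4) ^ e 4
          = (KQmk (X 0) * KQmk (X 1) ^ 3) * (KQmk (X 0) ^ (e 0 - 1) * KQmk (X 1) ^ (e 1 - 3) *
            KQmk (X 2) ^ e 2 * KQmk (X 3) ^ e 3 * KQmk (X 4) ^ e 4) := by ring
        _ = 0 := by rw [r2, zero_mul]
    rw [hz]; simp

lemma form_zero (k : ℤ) : Form k 0 := by
  refine ⟨0, k.toNat, (-k).toNat, by omega, ?_⟩; simp

lemma form_add (k : ℤ) (x y : KQring) (hx : Form k x) (hy : Form k y) : Form k (x + y) := by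
  obtain ⟨c₁, M₁, N₁, hk₁, rfl⟩ := hx
  obtain ⟨c₂, M₂, N₂, hk₂, rfl⟩ := hy
  refine ⟨c₁ + c₂, M₁ + M₂, N₁ + M₂, by omega, ?_⟩
  have hN : N₂ + M₁ = N₁ + M₂ := by omega
  rw [map_mul, map_mul, map_mul, map_mul, map_mul, map_mul, map_pow, map_pow,
    map_pow, map_pow, map_pow, map_pow, map_add, map_add]
  have e₁ : KQmk (X 3) ^ (M₁ + M₂) * KQmk (X 4) ^ (N₁ + M₂) =
      KQmk (X 3) ^ M₁ * KQmk (X 4) ^ N₁ := shift_pow M₁ N₁ M₂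
  have e₂ : KQmk (X 3) ^ (M₁ + M₂) * KQmk (X 4) ^ (N₁ + M₂) =
      KQmk (X 3) ^ M₂ * KQmk (X 4) ^ N₂ := by
    rw [show M₁ + M₂ = M₂ + M₁ from by omega, show N₁ + M₂ = N₂ + M₁ from hN.symm]
    exact shift_pow M₂ N₂ M₁
  linear_combination (-(KQmk (C c₁))) * e₁ - (KQmk (C c₂)) * e₂

lemma form_smul (k : ℤ) (a : ℤ_[2]) (x : KQring) (hx : Form k x) : Form k (a • x) := by
  obtain ⟨c, M, N, hk, rfl⟩ := hx
  refine ⟨a * c, M, N, hk, ?_⟩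
  have h1 : a • KQmk (C c * X 3 ^ M * X 4 ^ N) = KQmk (a • (C c * X 3 ^ M * X 4 ^ N)) := rfl
  rw [h1]
  apply congrArg
  rw [MvPolynomial.smul_eq_C_mul, map_mul]
  ring

lemma grade_form (k : ℤ) (x : KQring) (hx : x ∈ KQgrade (8 * k, 4 * k)) : Form k x := by
  refine Submodule.span_induction ?_ (form_zero k) (fun x y _ _ => form_add k x y)
    (fun a x _ => form_smul k a x) hx
  rintro x ⟨e, he, rfl⟩
  exact mono_reduce k e he

lemma KQf_monomial (e : Fin 5 →₀ ℕ) :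
    KQf (monomial e 1) = Polynomial.X ^ (e 0) * 0 ^ (e 1) * 2 ^ (e 2) := by
  rw [monomial_expand]
  simp [KQf]

lemma KQf_form (c : ℤ_[2]) (M N : ℕ) :
    KQf (C c * X 3 ^ M * X 4 ^ N) = Polynomial.C c := by
  simp [KQf]

/-- Residue detection map ℤ₂[X] → 𝔽₂ (evaluate at 0, reduce mod 2). -/
noncomputable def KQeps : Polynomial ℤ_[2] →+* ZMod 2 :=
  (PadicInt.toZMod).comp (Polynomial.evalRingHom (0 : ℤ_[2]))

noncomputable def KQJ : Ideal (Polynomial ℤ_[2]) := Ideal.span {2, Polynomial.X}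

lemma one_not_mem_KQJ : (1 : Polynomial ℤ_[2]) ∉ KQJ := by
  intro h
  have hle : KQJ ≤ RingHom.ker KQeps := by
    rw [KQJ, Ideal.span_le]
    rintro x hx
    simp only [Set.mem_insert_iff, Set.mem_singleton_iff] at hx
    rcases hx with h|h <;> subst h <;>
      simp [KQeps, RingHom.mem_ker, map_ofNat] <;> decide
  have := hle h
  rw [RingHom.mem_ker, map_one] at this
  exact one_ne_zero this

set_option synthInstance.maxHeartbeats 400000 in
lemma grade_phi_mem (v : ℤ × ℤ) (hv : v ∉ AddSubgroup.zmultiples ((8 : ℤ), (4 : ℤ)))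
    (x : KQring) (hx : x ∈ KQgrade v) : KQphi x ∈ KQJ := by
  have hXJ : (Polynomial.X : Polynomial ℤ_[2]) ∈ KQJ := Ideal.subset_span (by simp)
  have h2J : (2 : Polynomial ℤ_[2]) ∈ KQJ := Ideal.subset_span (by simp)
  refine Submodule.span_induction ?_ (by simp) (fun a b _ _ ha hb => by
    rw [map_add]; exact KQJ.add_mem ha hb) (fun a y _ hy => ?_) hx
  · rintro z ⟨e, he, rfl⟩
    rw [KQphi_mk, KQf_monomial]
    by_cases h1 : e 1 = 0
    · by_cases h0 : e 0 = 0
      · by_cases h2 : e 2 = 0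
        · exfalso
          obtain ⟨d1, d2⟩ := deg_eq e v.1 v.2 (by rw [he])
          refine hv (AddSubgroup.mem_zmultiples_iff.2 ⟨(e 3 : ℤ) - e 4, ?_⟩)
          have hvv : v = (v.1, v.2) := rfl
          rw [hvv, Prod.smul_mk, smul_eq_mul, smul_eq_mul, Prod.mk.injEq]
          omega
        · obtain ⟨c, hc⟩ : (2 : Polynomial ℤ_[2]) ∣
              Polynomial.X ^ (e 0) * 0 ^ (e 1) * 2 ^ (e 2) :=
            dvd_mul_of_dvd_right (dvd_pow_self 2 h2) _
          rw [hc]; exact Ideal.mul_mem_right _ _ h2J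
      · obtain ⟨c, hc⟩ : (Polynomial.X : Polynomial ℤ_[2]) ∣
            Polynomial.X ^ (e 0) * 0 ^ (e 1) * 2 ^ (e 2) :=
          ((dvd_pow_self _ h0).mul_right _).mul_right _
        rw [hc]; exact Ideal.mul_mem_right _ _ hXJ
    · rw [zero_pow h1]
      simp
  · obtain ⟨w, rfl⟩ := Ideal.Quotient.mk_surjective y
    have h1 : a • (Ideal.Quotient.mk _ w) = KQmk (C a * w) := by
      have : a • (Ideal.Quotient.mk _ w : KQring) = KQmk (a • w) := rfl
      rw [this, MvPolynomial.smul_eq_C_mul]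
    rw [h1, KQphi_mk, map_mul]
    exact Ideal.mul_mem_left _ _ hy

lemma unit_grade {x : KQring} (hu : IsUnit x) {v : ℤ × ℤ} (hv : x ∈ KQgrade v) :
    v ∈ AddSubgroup.zmultiples ((8 : ℤ), (4 : ℤ)) := by
  by_contra h
  have hm := grade_phi_mem v h x hv
  have := Ideal.eq_top_of_isUnit_mem _ hm (hu.map KQphi)
  exact one_not_mem_KQJ (this ▸ Submodule.mem_top)

/- STATEMENT 9: in A_* = ℤ₂[τ, h₁, a, b^{±1}]/(2h₁, τh₁³, a² - 4b, h₁a), the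
homogeneous units are exactly {u·b^k : u ∈ ℤ₂ˣ, k ∈ ℤ} (with b^k = b^m·(b')^n,
k = m - n); in particular a homogeneous unit exists in bidegree (p,q) iff
(p,q) ∈ ℤ·(8,4). -/
theorem stmt_9 :
    (∀ x : KQring, IsUnit x → (∃ v, x ∈ KQgrade v ∧ x ≠ 0) →
      ∃ (u : ℤ_[2]ˣ) (m n : ℕ),
        x = KQmk (C (u : ℤ_[2]) * X 3 ^ m * X 4 ^ n)) ∧
    (∀ v : ℤ × ℤ, (∃ x : KQring, IsUnit x ∧ x ∈ KQgrade v ∧ x ≠ 0) ↔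
      v ∈ AddSubgroup.zmultiples ((8 : ℤ), (4 : ℤ))) := by
  constructor
  · rintro x hu ⟨v, hv, -⟩
    have hz := unit_grade hu hv
    obtain ⟨k, hk⟩ := AddSubgroup.mem_zmultiples_iff.1 hz
    have hv' : v = (8 * k, 4 * k) := by
      rw [← hk, Prod.smul_mk, smul_eq_mul, smul_eq_mul, mul_comm k 8, mul_comm k 4]
    obtain ⟨c, M, N, -, rfl⟩ := grade_form k x (hv' ▸ hv)
    have hc : IsUnit c := by
      have hC : IsUnit (KQphi (KQmk (C c * X 3 ^ M * X 4 ^ N))) := hu.map _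
      rw [KQphi_mk, KQf_form] at hC
      exact Polynomial.isUnit_C.1 hC
    exact ⟨hc.unit, M, N, by rw [hc.unit_spec]⟩
  · intro v
    constructor
    · rintro ⟨x, hu, hgr, -⟩; exact unit_grade hu hgr
    · intro hz
      obtain ⟨k, hk⟩ := AddSubgroup.mem_zmultiples_iff.1 hz
      set M := k.toNat with hM
      set N := (-k).toNat with hN
      set e : Fin 5 →₀ ℕ := Finsupp.single 3 M + Finsupp.single 4 N with he
      have he0 : e 0 = 0 := by simp [he, Finsupp.single_apply]
      have he1 : e 1 = 0 := by simp [he, Finsupp.single_apply]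
      have he2 : e 2 = 0 := by simp [he, Finsupp.single_apply]
      have he3 : e 3 = M := by simp [he, Finsupp.single_apply]
      have he4 : e 4 = N := by simp [he, Finsupp.single_apply]
      refine ⟨KQmk (monomial e 1), ?_, ?_, ?_⟩
      · rw [monomial_expand, he0, he1, he2, he3, he4]
        simp only [pow_zero, one_mul, map_mul, map_pow]
        exact ((IsUnit.of_mul_eq_one _ r5).pow M).mul
          ((IsUnit.of_mul_eq_one _ (by rw [mul_comm]; exact r5)).pow N)
      · refine Submodule.subset_span ⟨e, ?_, rfl⟩
        rw [Fin.sum_univ_five, he0, he1, he2, he3, he4, ← hk]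
        simp only [KQdeg, Matrix.cons_val_zero, Matrix.cons_val_one, Matrix.head_cons,
          Matrix.cons_val_two, Matrix.cons_val_three, Matrix.cons_val_four, Matrix.tail_cons,
          Prod.smul_mk, smul_eq_mul, Prod.mk.injEq, Prod.ext_iff, Prod.fst_add, Prod.snd_add]
        constructor <;> push_cast <;> omega
      · intro h0
        have h1 : KQphi (KQmk (monomial e 1)) = 0 := by rw [h0, map_zero]
        rw [KQphi_mk, KQf_monomial, he0, he1, he2] at h1
        simp at h1
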